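/- Let f : [0,1]^d → ℝ be Lipschitz continuous with constant L (with respect to the Euclidean norm). Then for every n ≥ 1 and every x ∈ [0,1]^d, the multivariate Bernstein polynomial B_n(f)(x) = ∑_{0 ≤ k ≤ n} f(k/n) ∏_{j=1}^d p_{n,k_j}(x_j) satisfies |f(x) - B_n(f)(x)| ≤ (L/2)·√(d/n). -/

import Mathlib

set_option maxHeartbeats 1000000


open Finset

/-- The Bernstein polynomial `p_{n,k}(x) = C(n,k) x^k (1-x)^{n-k}`. -/
noncomputable def bern (n k : ℕ) (x : ℝ) : ℝ :=
  (n.choose k : ℝ) * x ^ k * (1 - x) ^ (n - k)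

/-- The multivariate Bernstein polynomial of a function `f : [0,1]^d → ℝ`:
`B_n(f)(x) = ∑_{0 ≤ k ≤ n} f(k/n) ∏_j p_{n,k_j}(x_j)`. -/
noncomputable def bernOp (d n : ℕ) (f : (Fin d → ℝ) → ℝ) (x : Fin d → ℝ) : ℝ :=
  ∑ k : Fin d → Fin (n + 1),
    f (fun j => ((k j : ℕ) : ℝ) / n) * ∏ j, bern n (k j) (x j)

lemma bern_nonneg {n k : ℕ} {x : ℝ} (hx : x ∈ Set.Icc (0:ℝ) 1) : 0 ≤ bern n k x := by
  obtain ⟨h0, h1⟩ := hx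
  have : (0:ℝ) ≤ 1 - x := by linarith
  unfold bern; positivity

lemma bern_sum (n : ℕ) {x : ℝ} (hx : x ∈ Set.Icc (0:ℝ) 1) :
    ∑ k : Fin (n+1), bern n k x = 1 := by
  have := bernstein.probability n ⟨x, hx⟩
  simpa [bern, bernstein_apply] using this

lemma sum_prod_eq (d n : ℕ) (g : Fin d → Fin (n+1) → ℝ) :
    ∑ k : Fin d → Fin (n+1), ∏ i, g i (k i) = ∏ i, ∑ m, g i m :=
  (Fintype.prod_sum g).symm

lemma bern_var (n : ℕ) (hn : 1 ≤ n) {x : ℝ} (hx : x ∈ Set.Icc (0:ℝ) 1) :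
    ∑ k : Fin (n+1), (x - (k : ℝ)/n)^2 * bern n k x = x * (1-x) / n := by
  have hpos : 0 < (n : ℝ) := by exact_mod_cast hn
  have := bernstein.variance (by omega : n ≠ 0) ⟨x, hx⟩
  simpa [bern, bernstein_apply, bernstein.z] using this

theorem bernstein_lipschitz_approx (d n : ℕ) (hd : 1 ≤ d) (hn : 1 ≤ n)
    (f : (Fin d → ℝ) → ℝ) (L : ℝ) (hL : 0 ≤ L)
    (hf : ∀ x y : Fin d → ℝ, (∀ j, x j ∈ Set.Icc (0 : ℝ) 1) →
      (∀ j, y j ∈ Set.Icc (0 : ℝ) 1) →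
      |f x - f y| ≤ L * Real.sqrt (∑ j, (x j - y j) ^ 2))
    (x : Fin d → ℝ) (hx : ∀ j, x j ∈ Set.Icc (0 : ℝ) 1) :
    |f x - bernOp d n f x| ≤ L / 2 * Real.sqrt ((d : ℝ) / n) := by
  have hnpos : 0 < (n : ℝ) := by exact_mod_cast hn
  set w : (Fin d → Fin (n+1)) → ℝ := fun k => ∏ j, bern n (k j) (x j) with hw
  set a : (Fin d → Fin (n+1)) → Fin d → ℝ := fun k j => ((k j : ℕ) : ℝ) / n with ha
  set A : (Fin d → Fin (n+1)) → ℝ := fun k => ∑ j, (x j - a k j) ^ 2 with hA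
  have hw0 : ∀ k, 0 ≤ w k := fun k => Finset.prod_nonneg fun j _ => bern_nonneg (hx j)
  have hA0 : ∀ k, 0 ≤ A k := fun k => Finset.sum_nonneg fun j _ => sq_nonneg _
  have hw1 : ∑ k, w k = 1 := by
    calc ∑ k, w k = ∏ j, ∑ m : Fin (n+1), bern n m (x j) :=
          sum_prod_eq d n fun i m => bern n m (x i)
      _ = 1 := Finset.prod_eq_one fun j _ => bern_sum n (hx j)
  have hak : ∀ k, ∀ j, a k j ∈ Set.Icc (0:ℝ) 1 := by
    intro k j
    constructor
    · positivity
    · rw [div_le_one hnpos]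
      exact_mod_cast Nat.lt_succ_iff.mp (k j).isLt
  -- variance sum per coordinate
  have hvar : ∀ j, ∑ k, w k * (x j - a k j) ^ 2 = x j * (1 - x j) / n := by
    intro j
    have key : ∑ k : Fin d → Fin (n+1),
        ∏ i, (bern n (k i) (x i) * (if i = j then (x j - ((k i : ℕ):ℝ)/n) ^ 2 else 1))
        = ∏ i, ∑ m : Fin (n+1),
          (bern n m (x i) * (if i = j then (x j - ((m : ℕ):ℝ)/n) ^ 2 else 1)) :=
      sum_prod_eq d n (fun i m => bern n m (x i) * (if i = j then (x j - ((m : ℕ):ℝ)/n) ^ 2 else 1))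
    calc ∑ k, w k * (x j - a k j) ^ 2
        = ∑ k : Fin d → Fin (n+1),
            ∏ i, (bern n (k i) (x i) * (if i = j then (x j - ((k i : ℕ):ℝ)/n) ^ 2 else 1)) := by
          refine Finset.sum_congr rfl fun k _ => ?_
          rw [Finset.prod_mul_distrib]
          simp [hw, ha]
      _ = ∏ i, ∑ m : Fin (n+1),
            (bern n m (x i) * (if i = j then (x j - ((m : ℕ):ℝ)/n) ^ 2 else 1)) := key
      _ = x j * (1 - x j) / n := by
          rw [Finset.prod_eq_single j]
          · rw [← bern_var n hn (hx j)]
            refine Finset.sum_congr rfl fun m _ => ?_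
            rw [if_pos rfl]
            ring
          · intro i _ hi
            simp only [if_neg hi, mul_one]
            exact bern_sum n (hx i)
          · simp
  have hAsum : ∑ k, w k * A k = ∑ j, x j * (1 - x j) / n := by
    simp_rw [hA, Finset.mul_sum]
    rw [Finset.sum_comm]
    exact Finset.sum_congr rfl fun j _ => hvar j
  -- Jensen via Cauchy-Schwarz
  have jensen : ∑ k, w k * Real.sqrt (A k) ≤ Real.sqrt (∑ k, w k * A k) := by
    calc ∑ k, w k * Real.sqrt (A k)
        = ∑ k, Real.sqrt (w k) * Real.sqrt (w k * A k) := by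
          refine Finset.sum_congr rfl fun k _ => ?_
          rw [Real.sqrt_mul (hw0 k), ← mul_assoc, Real.mul_self_sqrt (hw0 k)]
      _ ≤ Real.sqrt (∑ k, w k) * Real.sqrt (∑ k, w k * A k) :=
          Real.sum_sqrt_mul_sqrt_le _ hw0 (fun k => mul_nonneg (hw0 k) (hA0 k))
      _ = Real.sqrt (∑ k, w k * A k) := by rw [hw1, Real.sqrt_one, one_mul]
  -- main chain
  have step1 : |f x - bernOp d n f x| ≤ ∑ k, |f x - f (a k)| * w k := by
    have h1 : ∑ k, (f x - f (a k)) * w k = (∑ k, f x * w k) - ∑ k, f (a k) * w k := by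
      rw [← Finset.sum_sub_distrib]
      exact Finset.sum_congr rfl fun k _ => by ring
    have h2 : f x - bernOp d n f x = ∑ k, (f x - f (a k)) * w k := by
      rw [h1, ← Finset.mul_sum, hw1, mul_one]
      rfl
    rw [h2]
    calc |∑ k, (f x - f (a k)) * w k| ≤ ∑ k, |(f x - f (a k)) * w k| :=
          Finset.abs_sum_le_sum_abs _ _
      _ = ∑ k, |f x - f (a k)| * w k := by
          refine Finset.sum_congr rfl fun k _ => ?_
          rw [abs_mul, abs_of_nonneg (hw0 k)]
  have step2 : ∑ k, |f x - f (a k)| * w k ≤ L * ∑ k, w k * Real.sqrt (A k) := by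
    rw [Finset.mul_sum]
    refine Finset.sum_le_sum fun k _ => ?_
    have := hf x (a k) hx (hak k)
    calc |f x - f (a k)| * w k ≤ L * Real.sqrt (A k) * w k :=
          mul_le_mul_of_nonneg_right this (hw0 k)
      _ = L * (w k * Real.sqrt (A k)) := by ring
  have step3 : Real.sqrt (∑ k, w k * A k) ≤ Real.sqrt ((d : ℝ) / n / 4) := by
    apply Real.sqrt_le_sqrt
    rw [hAsum]
    have : ∑ j : Fin d, x j * (1 - x j) / n ≤ ∑ j : Fin d, (1/4 : ℝ) / n := by
      refine Finset.sum_le_sum fun j _ => ?_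
      have h1 := (hx j).1; have h2 := (hx j).2
      gcongr
      nlinarith [sq_nonneg (x j - 1/2)]
    calc ∑ j : Fin d, x j * (1 - x j) / n ≤ ∑ j : Fin d, (1/4 : ℝ) / n := this
      _ = (d : ℝ) / n / 4 := by
          rw [Finset.sum_const, Finset.card_univ, Fintype.card_fin]
          ring
  have hsq : Real.sqrt ((d : ℝ) / n / 4) = Real.sqrt ((d : ℝ) / n) / 2 := by
    rw [show ((d:ℝ)/n/4) = ((d:ℝ)/n) * (1/4) by ring,
      Real.sqrt_mul (by positivity),
      show (1/4 : ℝ) = (1/2)^2 by norm_num, Real.sqrt_sq (by norm_num)]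
    ring
  calc |f x - bernOp d n f x| ≤ ∑ k, |f x - f (a k)| * w k := step1
    _ ≤ L * ∑ k, w k * Real.sqrt (A k) := step2
    _ ≤ L * Real.sqrt (∑ k, w k * A k) := mul_le_mul_of_nonneg_left jensen hL
    _ ≤ L * Real.sqrt ((d : ℝ) / n / 4) := mul_le_mul_of_nonneg_left step3 hL
    _ = L / 2 * Real.sqrt ((d : ℝ) / n) := by rw [hsq]; ring
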